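/- (Uniform monotonicity of the p-Laplacian part of Lemma 4.4) Let p≥2. There exists a constant c_p>0 depending only on p such that for every locally finite graph G=(V,E) with measure μ and every h:V→(0,∞), and for all u1,u2∈W^{1,p}(V) (with weight h), one has ∑_{x∈V} μ(x)[ |∇u1|^{p−2}(x)·Γ(u1,u1−u2)(x) − |∇u2|^{p−2}(x)·Γ(u2,u1−u2)(x) + h(x)·(|u1(x)|^{p−2}u1(x) − |u2(x)|^{p−2}u2(x))·(u1(x)−u2(x)) ] ≥ c_p·‖u1−u2‖_{W^{1,p}}^p, the sum on the left being absolutely convergent. -/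

import Mathlib

open Real

noncomputable section

variable {V : Type*}

/-- The bilinear form Γ on a locally finite graph. -/
def lgam (w : V → V → ℝ) (μ : V → ℝ) (u v : V → ℝ) (x : V) : ℝ :=
  (1 / (2 * μ x)) * ∑' y, w x y * (u y - u x) * (v y - v x)

/-- Length of the gradient: `|∇u|(x) = √(Γ(u,u)(x))`. -/
def lgnorm (w : V → V → ℝ) (μ : V → ℝ) (u : V → ℝ) (x : V) : ℝ :=
  Real.sqrt (lgam w μ u u x)

/-- Degree of a vertex. -/
def ldeg (w : V → V → ℝ) (x : V) : ℝ := ∑' y, w x y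

/-- Membership in the Sobolev space `W^{1,l}(V)` (with weight `h`). -/
def memW1 (w : V → V → ℝ) (μ h : V → ℝ) (l : ℝ) (u : V → ℝ) : Prop :=
  Summable (fun x => μ x * (lgnorm w μ u x ^ l + h x * |u x| ^ l))

/-- The Sobolev norm `‖u‖_{W^{1,l}}` (with weight `h`). -/
def w1norm (w : V → V → ℝ) (μ h : V → ℝ) (l : ℝ) (u : V → ℝ) : ℝ :=
  (∑' x, μ x * (lgnorm w μ u x ^ l + h x * |u x| ^ l)) ^ (1 / l)

/-- The functional Φ̄. -/
def PhiL (w : V → V → ℝ) (μ h1 h2 : V → ℝ) (p q : ℝ) (u v : V → ℝ) : ℝ :=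
  (1 / p) * w1norm w μ h1 p u ^ p + (1 / q) * w1norm w μ h2 q v ^ q

/-- The functional Ψ̄. -/
def PsiL (μ : V → ℝ) (F : V → ℝ → ℝ → ℝ) (u v : V → ℝ) : ℝ :=
  ∑' x, μ x * F x (u x) (v x)

end

section helpers


lemma pow_split2 (p : ℝ) (hp : 2 ≤ p) {A : ℝ} (hA : 0 ≤ A) :
    A ^ (p - 2) * A ^ (2:ℝ) = A ^ p := by
  rw [← Real.rpow_add' hA (show p - 2 + 2 ≠ 0 by intro hc; linarith)]
  norm_num

lemma pow_split1 (p : ℝ) (hp : 2 ≤ p) {A : ℝ} (hA : 0 ≤ A) :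
    A ^ (p - 1) * A = A ^ p := by
  have := Real.rpow_add' hA (show p - 1 + 1 ≠ 0 by intro hc; linarith)
  rw [show p - 1 + 1 = p by ring] at this
  rw [this, Real.rpow_one]

lemma mixed_le (p : ℝ) (hp : 2 ≤ p) {A B : ℝ} (hA : 0 ≤ A) (hB : 0 ≤ B) :
    A ^ (p - 1) * B ≤ A ^ p + B ^ p := by
  rcases le_total B A with hba | hab
  · calc A ^ (p-1) * B ≤ A ^ (p-1) * A :=
          mul_le_mul_of_nonneg_left hba (Real.rpow_nonneg hA _)
      _ = A ^ p := pow_split1 p hp hA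
      _ ≤ A ^ p + B ^ p := le_add_of_nonneg_right (Real.rpow_nonneg hB _)
  · calc A ^ (p-1) * B ≤ B ^ (p-1) * B :=
          mul_le_mul_of_nonneg_right (Real.rpow_le_rpow hA hab (by linarith)) hB
      _ = B ^ p := pow_split1 p hp hB
      _ ≤ A ^ p + B ^ p := le_add_of_nonneg_left (Real.rpow_nonneg hA _)

variable {E : Type*} [SeminormedAddCommGroup E] [InnerProductSpace ℝ E]

/-- Simon-type lower bound. -/
lemma simon_lower_aux (p : ℝ) (hp : 2 ≤ p) (a b : E) :
    (2:ℝ) ^ (1 - p) * ‖a - b‖ ^ p ≤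
      ‖a‖ ^ (p - 2) * (inner ℝ a (a - b) : ℝ) - ‖b‖ ^ (p - 2) * (inner ℝ b (a - b) : ℝ) := by
  set A := ‖a‖ with hA
  set B := ‖b‖ with hB
  have hA0 : 0 ≤ A := norm_nonneg a
  have hB0 : 0 ≤ B := norm_nonneg b
  set t : ℝ := inner ℝ a b with ht
  have h1 : (inner ℝ a (a - b) : ℝ) = A ^ (2:ℝ) - t := by
    rw [inner_sub_right, real_inner_self_eq_norm_sq, Real.rpow_two]
  have h2 : (inner ℝ b (a - b) : ℝ) = t - B ^ (2:ℝ) := by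
    rw [inner_sub_right, real_inner_self_eq_norm_sq, real_inner_comm, Real.rpow_two]
  have hC : ‖a - b‖ ^ (2:ℝ) = A ^ (2:ℝ) + B ^ (2:ℝ) - 2 * t := by
    rw [Real.rpow_two, Real.rpow_two, Real.rpow_two, norm_sub_sq_real]; ring
  -- step 1: RHS ≥ (1/2)(A^{p-2}+B^{p-2}) ‖a-b‖²
  have mono : 0 ≤ (A ^ (p-2) - B ^ (p-2)) * (A ^ (2:ℝ) - B ^ (2:ℝ)) := by
    rcases le_total A B with hle | hle
    · have h1 : A ^ (p-2) ≤ B ^ (p-2) := Real.rpow_le_rpow hA0 hle (by linarith)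
      have h2 : A ^ (2:ℝ) ≤ B ^ (2:ℝ) := Real.rpow_le_rpow hA0 hle (by norm_num)
      nlinarith
    · have h1 : B ^ (p-2) ≤ A ^ (p-2) := Real.rpow_le_rpow hB0 hle (by linarith)
      have h2 : B ^ (2:ℝ) ≤ A ^ (2:ℝ) := Real.rpow_le_rpow hB0 hle (by norm_num)
      nlinarith
  have step1 : (1/2) * (A ^ (p-2) + B ^ (p-2)) * ‖a - b‖ ^ (2:ℝ) ≤
      A ^ (p - 2) * (inner ℝ a (a - b) : ℝ) - B ^ (p - 2) * (inner ℝ b (a - b) : ℝ) := by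
    rw [h1, h2, hC]
    have e1 : A ^ (p-2) * A ^ (2:ℝ) = A ^ p := pow_split2 p hp hA0
    have e2 : B ^ (p-2) * B ^ (2:ℝ) = B ^ p := pow_split2 p hp hB0
    nlinarith [mono]
  -- step 2: 2^{1-p} ‖a-b‖^p ≤ (1/2)(A^{p-2}+B^{p-2}) ‖a-b‖²
  have hC0 : 0 ≤ ‖a - b‖ := norm_nonneg _
  have hCb : ‖a - b‖ ^ (p-2) ≤ 2 ^ (p-2) * (A ^ (p-2) + B ^ (p-2)) := by
    have htri : ‖a - b‖ ≤ A + B := norm_sub_le a b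
    have h2m : A + B ≤ 2 * max A B := by
      rcases le_total A B with h | h
      · simp [max_eq_right h]; linarith
      · simp [max_eq_left h]; linarith
    calc ‖a - b‖ ^ (p-2) ≤ (2 * max A B) ^ (p-2) :=
          Real.rpow_le_rpow hC0 (htri.trans h2m) (by linarith)
      _ = 2 ^ (p-2) * (max A B) ^ (p-2) := by
          rw [Real.mul_rpow (by norm_num) (le_max_of_le_left hA0)]
      _ ≤ 2 ^ (p-2) * (A ^ (p-2) + B ^ (p-2)) := by
          apply mul_le_mul_of_nonneg_left _ (Real.rpow_nonneg (by norm_num) _)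
          rcases le_total A B with h | h
          · rw [max_eq_right h]; exact le_add_of_nonneg_left (Real.rpow_nonneg hA0 _)
          · rw [max_eq_left h]; exact le_add_of_nonneg_right (Real.rpow_nonneg hB0 _)
  have step2 : (2:ℝ) ^ (1 - p) * ‖a - b‖ ^ p ≤
      (1/2) * (A ^ (p-2) + B ^ (p-2)) * ‖a - b‖ ^ (2:ℝ) := by
    have hsplit : ‖a - b‖ ^ (p-2) * ‖a - b‖ ^ (2:ℝ) = ‖a - b‖ ^ p := pow_split2 p hp hC0
    have hC2 : (0:ℝ) ≤ ‖a - b‖ ^ (2:ℝ) := Real.rpow_nonneg hC0 _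
    have key : ‖a - b‖ ^ p ≤ 2 ^ (p-2) * (A ^ (p-2) + B ^ (p-2)) * ‖a - b‖ ^ (2:ℝ) := by
      rw [← hsplit]
      exact mul_le_mul_of_nonneg_right hCb hC2
    have h2p : (2:ℝ) ^ (1-p) * (2:ℝ) ^ (p-2) = 1/2 := by
      rw [← Real.rpow_add (by norm_num : (0:ℝ) < 2)]
      norm_num
    calc (2:ℝ) ^ (1 - p) * ‖a - b‖ ^ p
        ≤ (2:ℝ) ^ (1-p) * (2 ^ (p-2) * (A ^ (p-2) + B ^ (p-2)) * ‖a - b‖ ^ (2:ℝ)) :=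
          mul_le_mul_of_nonneg_left key (Real.rpow_nonneg (by norm_num) _)
      _ = (1/2) * (A ^ (p-2) + B ^ (p-2)) * ‖a - b‖ ^ (2:ℝ) := by
          rw [← mul_assoc, ← mul_assoc, h2p]
  exact step2.trans step1

/-- Simon-type upper bound for summability. -/
lemma simon_upper_aux (p : ℝ) (hp : 2 ≤ p) (a b : E) :
    |‖a‖ ^ (p - 2) * (inner ℝ a (a - b) : ℝ) - ‖b‖ ^ (p - 2) * (inner ℝ b (a - b) : ℝ)| ≤
      3 * (‖a‖ ^ p + ‖b‖ ^ p) := by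
  set A := ‖a‖; set B := ‖b‖
  have hA0 : 0 ≤ A := norm_nonneg a
  have hB0 : 0 ≤ B := norm_nonneg b
  have c1 : |(inner ℝ a (a - b) : ℝ)| ≤ A * (A + B) := by
    calc |(inner ℝ a (a - b) : ℝ)| ≤ A * ‖a - b‖ := abs_real_inner_le_norm a (a-b)
      _ ≤ A * (A + B) := mul_le_mul_of_nonneg_left (norm_sub_le a b) hA0
  have c2 : |(inner ℝ b (a - b) : ℝ)| ≤ B * (A + B) := by
    calc |(inner ℝ b (a - b) : ℝ)| ≤ B * ‖a - b‖ := abs_real_inner_le_norm b (a-b)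
      _ ≤ B * (A + B) := mul_le_mul_of_nonneg_left (norm_sub_le a b) hB0
  have hAp : 0 ≤ A ^ (p-2) := Real.rpow_nonneg hA0 _
  have hBp : 0 ≤ B ^ (p-2) := Real.rpow_nonneg hB0 _
  have e1 : A ^ (p-2) * (A * (A+B)) = A ^ (p-1) * A + A ^ (p-1) * B := by
    have : A ^ (p-2) * A = A ^ (p-1) := by
      have := Real.rpow_add' hA0 (show p - 2 + 1 ≠ 0 by intro hc; linarith)
      rw [Real.rpow_one] at this
      rw [← this]; congr 1; ring
    calc A ^ (p-2) * (A * (A+B)) = (A ^ (p-2) * A) * (A+B) := by ring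
      _ = A ^ (p-1) * (A + B) := by rw [this]
      _ = A ^ (p-1) * A + A ^ (p-1) * B := by ring
  have e2 : B ^ (p-2) * (B * (A+B)) = B ^ (p-1) * B + B ^ (p-1) * A := by
    have hth : B ^ (p-2) * B = B ^ (p-1) := by
      have := Real.rpow_add' hB0 (show p - 2 + 1 ≠ 0 by intro hc; linarith)
      rw [Real.rpow_one] at this
      rw [← this]; congr 1; ring
    calc B ^ (p-2) * (B * (A+B)) = (B ^ (p-2) * B) * (A+B) := by ring
      _ = B ^ (p-1) * (A + B) := by rw [hth]
      _ = B ^ (p-1) * B + B ^ (p-1) * A := by ring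
  have b1 : A ^ (p-1) * A = A ^ p := pow_split1 p hp hA0
  have b2 : B ^ (p-1) * B = B ^ p := pow_split1 p hp hB0
  have m1 : A ^ (p-1) * B ≤ A ^ p + B ^ p := mixed_le p hp hA0 hB0
  have m2 : B ^ (p-1) * A ≤ A ^ p + B ^ p := by
    have := mixed_le p hp hB0 hA0; linarith
  calc |A ^ (p - 2) * (inner ℝ a (a - b) : ℝ) - B ^ (p - 2) * (inner ℝ b (a - b) : ℝ)|
      ≤ |A ^ (p - 2) * (inner ℝ a (a - b) : ℝ)| + |B ^ (p - 2) * (inner ℝ b (a - b) : ℝ)| :=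
        abs_sub _ _
    _ = A ^ (p-2) * |(inner ℝ a (a - b) : ℝ)| + B ^ (p-2) * |(inner ℝ b (a - b) : ℝ)| := by
        rw [abs_mul, abs_mul, abs_of_nonneg hAp, abs_of_nonneg hBp]
    _ ≤ A ^ (p-2) * (A * (A+B)) + B ^ (p-2) * (B * (A+B)) := by
        exact add_le_add (mul_le_mul_of_nonneg_left c1 hAp) (mul_le_mul_of_nonneg_left c2 hBp)
    _ = (A ^ (p-1) * A + A ^ (p-1) * B) + (B ^ (p-1) * B + B ^ (p-1) * A) := by
        rw [e1, e2]
    _ ≤ 3 * (A ^ p + B ^ p) := by rw [b1, b2] at *; linarith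


lemma simon_lower_real (p : ℝ) (hp : 2 ≤ p) (s t : ℝ) :
    (2:ℝ) ^ (1 - p) * |s - t| ^ p ≤ (|s| ^ (p-2) * s - |t| ^ (p-2) * t) * (s - t) := by
  have h := simon_lower_aux (E := ℝ) p hp s t
  have h1 : (inner ℝ s (s - t) : ℝ) = s * (s - t) := by simp [RCLike.inner_apply]; ring
  have h2 : (inner ℝ t (s - t) : ℝ) = t * (s - t) := by simp [RCLike.inner_apply]; ring
  rw [h1, h2] at h; simp only [Real.norm_eq_abs] at h
  calc (2:ℝ) ^ (1 - p) * |s - t| ^ p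
      ≤ |s| ^ (p-2) * (s * (s - t)) - |t| ^ (p-2) * (t * (s - t)) := h
    _ = (|s| ^ (p-2) * s - |t| ^ (p-2) * t) * (s - t) := by ring

lemma simon_upper_real (p : ℝ) (hp : 2 ≤ p) (s t : ℝ) :
    |(|s| ^ (p-2) * s - |t| ^ (p-2) * t) * (s - t)| ≤ 3 * (|s| ^ p + |t| ^ p) := by
  have h := simon_upper_aux (E := ℝ) p hp s t
  have h1 : (inner ℝ s (s - t) : ℝ) = s * (s - t) := by simp [RCLike.inner_apply]; ring
  have h2 : (inner ℝ t (s - t) : ℝ) = t * (s - t) := by simp [RCLike.inner_apply]; ring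
  rw [h1, h2] at h; simp only [Real.norm_eq_abs] at h
  calc |(|s| ^ (p-2) * s - |t| ^ (p-2) * t) * (s - t)|
      = |(|s| ^ (p-2) * (s * (s - t)) - |t| ^ (p-2) * (t * (s - t)))| := by ring_nf
    _ ≤ 3 * (|s| ^ p + |t| ^ p) := h

noncomputable def gphi {V : Type*} (w : V → V → ℝ) (μ : V → ℝ) {x : V} (s : Finset V) (u : V → ℝ) :
    EuclideanSpace ℝ s := WithLp.toLp 2 (fun y : s => Real.sqrt (w x y.1 / (2 * μ x)) * (u y.1 - u x))

lemma lgam_inner {V : Type*} (w : V → V → ℝ) (μ : V → ℝ)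
    (hw0 : ∀ x y, 0 ≤ w x y) (hfin : ∀ x, {y | 0 < w x y}.Finite) (hμ : ∀ x, 0 < μ x)
    (x : V) (u v : V → ℝ) :
    lgam w μ u v x =
      (inner ℝ (gphi w μ (x := x) (hfin x).toFinset u) (gphi w μ (x := x) (hfin x).toFinset v) : ℝ) := by
  rw [lgam, tsum_eq_sum (s := (hfin x).toFinset)
    (fun y hy => by
      have : ¬ 0 < w x y := fun hc => hy ((hfin x).mem_toFinset.mpr hc)
      have hz : w x y = 0 := le_antisymm (not_lt.mp this) (hw0 x y)
      rw [hz]; ring)]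
  rw [PiLp.inner_apply]
  simp only [RCLike.inner_apply, conj_trivial, gphi, PiLp.toLp_apply]
  rw [Finset.sum_congr rfl (fun (i : (hfin x).toFinset) _ => mul_comm (Real.sqrt (w x i / (2 * μ x)) * (v i - v x)) (Real.sqrt (w x i / (2 * μ x)) * (u i - u x)))]
  rw [Finset.sum_coe_sort ((hfin x).toFinset)
    (fun y => Real.sqrt (w x y / (2 * μ x)) * (u y - u x) * (Real.sqrt (w x y / (2 * μ x)) * (v y - v x)))]
  rw [Finset.mul_sum]
  apply Finset.sum_congr rfl
  intro y _
  have hc : 0 ≤ w x y / (2 * μ x) := div_nonneg (hw0 x y) (by have := hμ x; linarith)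
  have hs : Real.sqrt (w x y / (2 * μ x)) * Real.sqrt (w x y / (2 * μ x)) = w x y / (2 * μ x) :=
    Real.mul_self_sqrt hc
  have hμx : (2 * μ x) ≠ 0 := ne_of_gt (by have := hμ x; linarith)
  rw [show Real.sqrt (w x y / (2 * μ x)) * (u y - u x) * (Real.sqrt (w x y / (2 * μ x)) * (v y - v x)) = (Real.sqrt (w x y / (2 * μ x)) * Real.sqrt (w x y / (2 * μ x))) * ((u y - u x) * (v y - v x)) by ring, hs]
  ring

lemma lgnorm_eq {V : Type*} (w : V → V → ℝ) (μ : V → ℝ)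
    (hw0 : ∀ x y, 0 ≤ w x y) (hfin : ∀ x, {y | 0 < w x y}.Finite) (hμ : ∀ x, 0 < μ x)
    (x : V) (u : V → ℝ) :
    lgnorm w μ u x = ‖gphi w μ (x := x) (hfin x).toFinset u‖ := by
  rw [lgnorm, lgam_inner w μ hw0 hfin hμ, real_inner_self_eq_norm_sq, Real.sqrt_sq (norm_nonneg _)]

lemma gphi_sub {V : Type*} (w : V → V → ℝ) (μ : V → ℝ) {x : V} (s : Finset V) (u1 u2 : V → ℝ) :
    gphi w μ (x := x) s (u1 - u2) = gphi w μ (x := x) s u1 - gphi w μ (x := x) s u2 := by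
  ext y
  simp only [gphi, Pi.sub_apply, PiLp.sub_apply, PiLp.toLp_apply]
  ring

end helpers

/-- Uniform monotonicity of the p-Laplacian part of Lemma 4.4. -/
theorem stmt17 (p : ℝ) (hp : 2 ≤ p) :
    ∃ c : ℝ, 0 < c ∧
      ∀ (V : Type) [Countable V] (w : V → V → ℝ) (μ : V → ℝ),
        (∀ x y, w x y = w y x) → (∀ x y, 0 ≤ w x y) → (∀ x, w x x = 0) →
        (∀ x, {y | 0 < w x y}.Finite) → (∀ x, 0 < μ x) →
        ∀ (h : V → ℝ), (∀ x, 0 < h x) →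
        ∀ u1 u2 : V → ℝ, memW1 w μ h p u1 → memW1 w μ h p u2 →
          Summable (fun x => μ x *
            (lgnorm w μ u1 x ^ (p - 2) * lgam w μ u1 (u1 - u2) x -
              lgnorm w μ u2 x ^ (p - 2) * lgam w μ u2 (u1 - u2) x +
              h x * (|u1 x| ^ (p - 2) * u1 x - |u2 x| ^ (p - 2) * u2 x) *
                (u1 x - u2 x))) ∧
          c * w1norm w μ h p (u1 - u2) ^ p ≤
            ∑' x, μ x *
              (lgnorm w μ u1 x ^ (p - 2) * lgam w μ u1 (u1 - u2) x -
                lgnorm w μ u2 x ^ (p - 2) * lgam w μ u2 (u1 - u2) x +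
                h x * (|u1 x| ^ (p - 2) * u1 x - |u2 x| ^ (p - 2) * u2 x) *
                  (u1 x - u2 x)) := by
  refine ⟨(2:ℝ) ^ (1 - p), Real.rpow_pos_of_pos (by norm_num) _, ?_⟩
  set c : ℝ := (2:ℝ) ^ (1 - p) with hc
  have hcpos : 0 < c := Real.rpow_pos_of_pos (by norm_num) _
  intro V _ w μ hsym hw0 hloop hfin hμ h hh u1 u2 hu1 hu2
  set f : V → ℝ := fun x => μ x *
      (lgnorm w μ u1 x ^ (p - 2) * lgam w μ u1 (u1 - u2) x -
        lgnorm w μ u2 x ^ (p - 2) * lgam w μ u2 (u1 - u2) x +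
        h x * (|u1 x| ^ (p - 2) * u1 x - |u2 x| ^ (p - 2) * u2 x) *
          (u1 x - u2 x)) with hf
  set g : V → ℝ := fun x =>
      μ x * (lgnorm w μ (u1 - u2) x ^ p + h x * |(u1 - u2) x| ^ p) with hg
  set F : V → ℝ := fun x =>
      3 * (μ x * (lgnorm w μ u1 x ^ p + h x * |u1 x| ^ p)) +
      3 * (μ x * (lgnorm w μ u2 x ^ p + h x * |u2 x| ^ p)) with hF
  -- pointwise facts
  have key : ∀ x, c * g x ≤ f x ∧ |f x| ≤ F x := by
    intro x
    set a := gphi w μ (x := x) (hfin x).toFinset u1 with ha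
    set b := gphi w μ (x := x) (hfin x).toFinset u2 with hb
    have hsub : gphi w μ (x := x) (hfin x).toFinset (u1 - u2) = a - b :=
      gphi_sub w μ _ u1 u2
    have hn1 : lgnorm w μ u1 x = ‖a‖ := lgnorm_eq w μ hw0 hfin hμ x u1
    have hn2 : lgnorm w μ u2 x = ‖b‖ := lgnorm_eq w μ hw0 hfin hμ x u2
    have hnv : lgnorm w μ (u1 - u2) x = ‖a - b‖ := by
      rw [lgnorm_eq w μ hw0 hfin hμ x (u1 - u2), hsub]
    have hg1 : lgam w μ u1 (u1 - u2) x = (inner ℝ a (a - b) : ℝ) := by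
      rw [lgam_inner w μ hw0 hfin hμ x u1 (u1 - u2), hsub]
    have hg2 : lgam w μ u2 (u1 - u2) x = (inner ℝ b (a - b) : ℝ) := by
      rw [lgam_inner w μ hw0 hfin hμ x u2 (u1 - u2), hsub]
    have hμ0 : (0:ℝ) ≤ μ x := (hμ x).le
    have hh0 : (0:ℝ) ≤ h x := (hh x).le
    have hvx : (u1 - u2) x = u1 x - u2 x := rfl
    constructor
    · -- lower bound
      have hgrad := simon_lower_aux p hp a b
      have hsc := simon_lower_real p hp (u1 x) (u2 x)
      have e1 : g x = μ x * (‖a - b‖ ^ p + h x * |u1 x - u2 x| ^ p) := by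
        rw [hg]; simp only [hnv, hvx]
      rw [e1, hf]
      simp only [hn1, hn2, hg1, hg2]
      have expand : c * (μ x * (‖a - b‖ ^ p + h x * |u1 x - u2 x| ^ p)) =
          μ x * (c * ‖a - b‖ ^ p + h x * (c * |u1 x - u2 x| ^ p)) := by ring
      rw [expand]
      apply mul_le_mul_of_nonneg_left _ hμ0
      have t2 : h x * (c * |u1 x - u2 x| ^ p) ≤
          h x * (|u1 x| ^ (p - 2) * u1 x - |u2 x| ^ (p - 2) * u2 x) * (u1 x - u2 x) := by
        calc h x * (c * |u1 x - u2 x| ^ p)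
            ≤ h x * ((|u1 x| ^ (p-2) * u1 x - |u2 x| ^ (p-2) * u2 x) * (u1 x - u2 x)) :=
              mul_le_mul_of_nonneg_left hsc hh0
          _ = h x * (|u1 x| ^ (p - 2) * u1 x - |u2 x| ^ (p - 2) * u2 x) * (u1 x - u2 x) := by
              ring
      linarith [hgrad, t2]
    · -- upper bound
      have hgrad := simon_upper_aux p hp a b
      have hsc := simon_upper_real p hp (u1 x) (u2 x)
      rw [hf, hF]
      simp only [hn1, hn2, hg1, hg2]
      rw [abs_mul, abs_of_nonneg hμ0]
      have habs : |‖a‖ ^ (p - 2) * (inner ℝ a (a - b) : ℝ) - ‖b‖ ^ (p - 2) * (inner ℝ b (a - b) : ℝ) +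
          h x * (|u1 x| ^ (p - 2) * u1 x - |u2 x| ^ (p - 2) * u2 x) * (u1 x - u2 x)| ≤
          3 * (‖a‖ ^ p + ‖b‖ ^ p) + h x * (3 * (|u1 x| ^ p + |u2 x| ^ p)) := by
        calc |‖a‖ ^ (p - 2) * (inner ℝ a (a - b) : ℝ) - ‖b‖ ^ (p - 2) * (inner ℝ b (a - b) : ℝ) +
            h x * (|u1 x| ^ (p - 2) * u1 x - |u2 x| ^ (p - 2) * u2 x) * (u1 x - u2 x)|
            ≤ |‖a‖ ^ (p - 2) * (inner ℝ a (a - b) : ℝ) - ‖b‖ ^ (p - 2) * (inner ℝ b (a - b) : ℝ)| +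
              |h x * (|u1 x| ^ (p - 2) * u1 x - |u2 x| ^ (p - 2) * u2 x) * (u1 x - u2 x)| :=
              abs_add_le _ _
          _ ≤ 3 * (‖a‖ ^ p + ‖b‖ ^ p) + h x * (3 * (|u1 x| ^ p + |u2 x| ^ p)) := by
              apply add_le_add hgrad
              have : |h x * (|u1 x| ^ (p - 2) * u1 x - |u2 x| ^ (p - 2) * u2 x) * (u1 x - u2 x)|
                  = h x * |(|u1 x| ^ (p - 2) * u1 x - |u2 x| ^ (p - 2) * u2 x) * (u1 x - u2 x)| := by
                rw [mul_assoc, abs_mul, abs_of_nonneg hh0]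
              rw [this]
              exact mul_le_mul_of_nonneg_left hsc hh0
      calc μ x * |‖a‖ ^ (p - 2) * (inner ℝ a (a - b) : ℝ) - ‖b‖ ^ (p - 2) * (inner ℝ b (a - b) : ℝ) +
            h x * (|u1 x| ^ (p - 2) * u1 x - |u2 x| ^ (p - 2) * u2 x) * (u1 x - u2 x)|
          ≤ μ x * (3 * (‖a‖ ^ p + ‖b‖ ^ p) + h x * (3 * (|u1 x| ^ p + |u2 x| ^ p))) :=
            mul_le_mul_of_nonneg_left habs hμ0
        _ = 3 * (μ x * (‖a‖ ^ p + h x * |u1 x| ^ p)) +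
            3 * (μ x * (‖b‖ ^ p + h x * |u2 x| ^ p)) := by ring
  have hFsum : Summable F := (hu1.mul_left 3).add (hu2.mul_left 3)
  have hfabs : Summable (fun x => |f x|) :=
    Summable.of_nonneg_of_le (fun x => abs_nonneg _) (fun x => (key x).2) hFsum
  have hfsum : Summable f := hfabs.of_abs
  have hgnn : ∀ x, 0 ≤ g x := by
    intro x
    apply mul_nonneg (hμ x).le
    apply add_nonneg (Real.rpow_nonneg (Real.sqrt_nonneg _) _)
    exact mul_nonneg (hh x).le (Real.rpow_nonneg (abs_nonneg _) _)
  have hgsum : Summable g := by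
    apply Summable.of_nonneg_of_le hgnn (fun x => ?_) (hFsum.mul_left c⁻¹)
    have h1 : c * g x ≤ f x := (key x).1
    have h2 : f x ≤ |f x| := le_abs_self _
    have h3 : |f x| ≤ F x := (key x).2
    calc g x = c⁻¹ * (c * g x) := by field_simp
      _ ≤ c⁻¹ * F x := by
          apply mul_le_mul_of_nonneg_left _ (inv_nonneg.mpr hcpos.le)
          linarith
  refine ⟨hfsum, ?_⟩
  have hpow : w1norm w μ h p (u1 - u2) ^ p = ∑' x, g x := by
    rw [w1norm]
    have hnn : 0 ≤ ∑' x, g x := tsum_nonneg hgnn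
    rw [show (∑' x, μ x * (lgnorm w μ (u1 - u2) x ^ p + h x * |(u1-u2) x| ^ p)) = ∑' x, g x from rfl]
    rw [← Real.rpow_mul hnn, one_div_mul_cancel (by linarith : p ≠ 0), Real.rpow_one]
  rw [hpow]
  calc c * ∑' x, g x = ∑' x, c * g x := (tsum_mul_left).symm
    _ ≤ ∑' x, f x := Summable.tsum_le_tsum (fun x => (key x).1) (hgsum.mul_left c) hfsum
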